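/- For every x ∈ (0, π/2) and every integer m ≥ 2, |sin x / x - (cos x + 2)/3 - Σ_{k=2}^{m} (-1)^{k+1} B(k) x^{2k}| < B(m+1) x^{2m+2}. -/

import Mathlib

open Real Finset

/-- The coefficient `B(k) = (2/3)·(k-1)/(2k+1)!`. -/
noncomputable def wchB (k : ℕ) : ℝ :=
  (2 / 3) * ((k : ℝ) - 1) / (Nat.factorial (2 * k + 1) : ℝ)


lemma alt_nonneg (c : ℕ → ℝ) (h0 : ∀ j, 0 ≤ c j) (hd : ∀ j, c (j+1) ≤ c j)
    (hs : Summable fun j => (-1:ℝ)^j * c j) :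
    0 ≤ ∑' j, (-1:ℝ)^j * c j := by
  set f : ℕ → ℝ := fun j => (-1:ℝ)^j * c j with hf
  have he : Summable fun k => f (2*k) := hs.comp_injective (fun a b h => by omega)
  have ho : Summable fun k => f (2*k+1) := hs.comp_injective (fun a b h => by omega)
  have hsplit := tsum_even_add_odd he ho
  have hadd : ∑' k, (f (2*k) + f (2*k+1)) = (∑' k, f (2*k)) + ∑' k, f (2*k+1) :=
    Summable.tsum_add he ho
  have : 0 ≤ ∑' k, (f (2*k) + f (2*k+1)) := by
    apply tsum_nonneg
    intro k
    have : f (2*k) + f (2*k+1) = c (2*k) - c (2*k+1) := by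
      simp [hf, pow_succ, pow_mul]
      ring
    rw [this]
    linarith [hd (2*k)]
  linarith [hsplit, hadd, this]

lemma alt_le (c : ℕ → ℝ) (h0 : ∀ j, 0 ≤ c j) (hd : ∀ j, c (j+1) ≤ c j)
    (hs : Summable fun j => (-1:ℝ)^j * c j) :
    ∑' j, (-1:ℝ)^j * c j ≤ c 0 := by
  have hs' : Summable fun j => (-1:ℝ)^j * c (j+1) := by
    have := (summable_nat_add_iff 1).2 hs
    have hneg := this.neg
    refine hneg.congr fun j => by simp [pow_succ]
  have hlow := alt_nonneg (fun j => c (j+1)) (fun j => h0 _) (fun j => hd _) hs'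
  have hzero := Summable.tsum_eq_zero_add hs
  have : ∑' j, (-1:ℝ)^(j+1) * c (j+1) = - ∑' j, (-1:ℝ)^j * c (j+1) := by
    rw [← tsum_neg]
    congr 1; funext j; ring
  simp only [pow_succ] at hzero
  -- hzero : tsum = f 0 + ∑' j, (-1)^j * (-1) * c (j+1)
  have h2 : ∑' (j:ℕ), (-1:ℝ)^j * (-1) * c (j+1) = - ∑' j, (-1:ℝ)^j * c (j+1) := by
    rw [← tsum_neg]; congr 1; funext j; ring
  rw [h2] at hzero
  simp at hzero
  linarith [hlow, hzero.le, hzero.ge]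

lemma alt_strict (c : ℕ → ℝ) (h0 : ∀ j, 0 < c j) (hd : ∀ j, c (j+1) < c j)
    (hs : Summable fun j => (-1:ℝ)^j * c j) :
    0 < ∑' j, (-1:ℝ)^j * c j ∧ ∑' j, (-1:ℝ)^j * c j < c 0 := by
  have hs1 : Summable fun j => (-1:ℝ)^(j+1) * c (j+1) := (summable_nat_add_iff 1).2 hs
  have hs2 : Summable fun j => (-1:ℝ)^j * c (j+2) := by
    have := (summable_nat_add_iff 2).2 hs
    refine this.congr fun j => ?_
    rw [pow_add]; ring
  have hT0 : 0 ≤ ∑' j, (-1:ℝ)^j * c (j+2) :=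
    alt_nonneg (fun j => c (j+2)) (fun j => (h0 _).le) (fun j => (hd _).le) hs2
  have hT1 : ∑' j, (-1:ℝ)^j * c (j+2) ≤ c 2 :=
    alt_le (fun j => c (j+2)) (fun j => (h0 _).le) (fun j => (hd _).le) hs2
  have e1 := Summable.tsum_eq_zero_add hs
  have e2 := Summable.tsum_eq_zero_add hs1
  have e3 : ∑' j, (-1:ℝ)^(j+1+1) * c (j+1+1) = ∑' j, (-1:ℝ)^j * c (j+2) := by
    refine tsum_congr fun j => ?_
    rw [show j+1+1 = j+2 from rfl, pow_add]; ring
  rw [e3] at e2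
  rw [e2] at e1
  norm_num at e1
  rw [e1]
  constructor
  · have := hd 0; linarith
  · have := hd 1; linarith

lemma hasSum_h (x : ℝ) (hx : x ≠ 0) :
    HasSum (fun n : ℕ => (-1:ℝ)^(n+1) * wchB n * x^(2*n))
      (Real.sin x / x - Real.cos x / 3) := by
  have hsin := (Real.hasSum_sin x).div_const x
  have hcos := (Real.hasSum_cos x).div_const 3
  have key := hsin.sub hcos
  have heq : (fun n : ℕ => (-1:ℝ)^(n+1) * wchB n * x^(2*n))
      = fun n : ℕ => (-1:ℝ)^n * x^(2*n+1) / (Nat.factorial (2*n+1) : ℝ) / x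
          - ((-1:ℝ)^n * x^(2*n) / (Nat.factorial (2*n) : ℝ)) / 3 := by
    funext n
    have hfac : ((Nat.factorial (2*n+1) : ℝ)) = (2*(n:ℝ)+1) * (Nat.factorial (2*n) : ℝ) := by
      rw [Nat.factorial_succ]; push_cast; ring
    have h1 : ((Nat.factorial (2*n) : ℝ)) ≠ 0 := by positivity
    have h2 : (2*(n:ℝ)+1) ≠ 0 := by positivity
    unfold wchB
    rw [hfac, pow_succ, pow_succ]
    field_simp
    ring
  rw [heq]
  exact key

lemma wchB_pos {K : ℕ} (hK : 2 ≤ K) : 0 < wchB K := by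
  have hk : (2:ℝ) ≤ K := by exact_mod_cast hK
  unfold wchB
  have : (0:ℝ) < (Nat.factorial (2*K+1) : ℝ) := by positivity
  have h1 : (0:ℝ) < (K:ℝ) - 1 := by linarith
  positivity

lemma wchB_succ_lt {K : ℕ} (hK : 3 ≤ K) {x : ℝ} (hx0 : 0 < x) (hx2 : x < 2) :
    wchB (K+1) * x^(2*(K+1)) < wchB K * x^(2*K) := by
  have hk : (3:ℝ) ≤ (K:ℝ) := by exact_mod_cast hK
  have hfpos : (0:ℝ) < (Nat.factorial (2*K+1) : ℝ) := by positivity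
  have hfac : ((Nat.factorial (2*(K+1)+1)) : ℝ)
      = (2*(K:ℝ)+3)*(2*(K:ℝ)+2)*(Nat.factorial (2*K+1) : ℝ) := by
    have he : 2*(K+1)+1 = (2*K+1) + 1 + 1 := by ring
    rw [he, Nat.factorial_succ, Nat.factorial_succ]
    push_cast; ring
  have hxpow : x^(2*(K+1)) = x^(2*K) * x^2 := by
    rw [show 2*(K+1) = 2*K+2 from by ring, pow_add]
  have hX : (0:ℝ) < x^(2*K) := by positivity
  have hx4 : x^2 < 4 := by nlinarith
  have key : (K:ℝ) * x^2 < ((K:ℝ)-1)*((2*(K:ℝ)+3)*(2*(K:ℝ)+2)) := by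
    have h4 : (K:ℝ) * x^2 < (K:ℝ) * 4 := by
      apply mul_lt_mul_of_pos_left hx4; linarith
    have h3 : (0:ℝ) ≤ (K:ℝ) - 3 := by linarith
    nlinarith [mul_nonneg (mul_nonneg h3 h3) h3, mul_nonneg h3 h3, sq_nonneg ((K:ℝ)-3)]
  have lhs_eq : wchB (K+1) * x^(2*(K+1))
      = (2/3*((K:ℝ))) * (x^(2*K)*x^2)
        / ((2*(K:ℝ)+3)*(2*(K:ℝ)+2)*(Nat.factorial (2*K+1) : ℝ)) := by
    unfold wchB; rw [hfac, hxpow]; push_cast; ring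
  have rhs_eq : wchB K * x^(2*K)
      = (2/3*((K:ℝ)-1)) * x^(2*K) / (Nat.factorial (2*K+1) : ℝ) := by
    unfold wchB; ring
  rw [lhs_eq, rhs_eq, div_lt_div_iff₀ (by positivity) (by positivity)]
  have key2 := mul_lt_mul_of_pos_left key (mul_pos hX hfpos)
  nlinarith [key2]

theorem sinx_div_x_sub_cos_error :
    ∀ x ∈ Set.Ioo (0 : ℝ) (π / 2), ∀ m : ℕ, 2 ≤ m →
      |Real.sin x / x - (Real.cos x + 2) / 3
          - ∑ k ∈ Finset.Icc 2 m, (-1 : ℝ) ^ (k + 1) * wchB k * x ^ (2 * k)|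
        < wchB (m + 1) * x ^ (2 * m + 2) := by
  rintro x ⟨hx0, hxpi⟩ m hm
  have hx2 : x < 2 := by
    have := Real.pi_lt_d2
    linarith
  have hxne : x ≠ 0 := ne_of_gt hx0
  set H : ℕ → ℝ := fun n => (-1:ℝ)^(n+1) * wchB n * x^(2*n) with hH
  have hsum := hasSum_h x hxne
  -- partial sum identity
  have hsplit : ∑ k ∈ Finset.range (m+1), H k
      = H 0 + H 1 + ∑ k ∈ Finset.Icc 2 m, H k := by
    rw [Finset.range_eq_Ico,
      ← Finset.sum_Ico_consecutive _ (Nat.zero_le 2) (by omega : 2 ≤ m+1)]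
    rw [Finset.Ico_add_one_right_eq_Icc]
    congr 1
    have h2 : Finset.Ico 0 2 = ({0, 1} : Finset ℕ) := by decide
    rw [h2, Finset.sum_insert (by decide), Finset.sum_singleton]
  have hH0 : H 0 = 2/3 := by norm_num [hH, wchB]
  have hH1 : H 1 = 0 := by norm_num [hH, wchB]
  -- tail
  have htail := Summable.sum_add_tsum_nat_add (f := H) (m+1) hsum.summable
  have hE : Real.sin x / x - (Real.cos x + 2) / 3
      - ∑ k ∈ Finset.Icc 2 m, (-1 : ℝ) ^ (k + 1) * wchB k * x ^ (2 * k)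
      = ∑' i, H (i + (m+1)) := by
    have ht : ∑' i, H (i + (m+1)) = Real.sin x / x - Real.cos x / 3
        - ∑ k ∈ Finset.range (m+1), H k := by
      rw [← hsum.tsum_eq]; linarith [htail]
    rw [ht, hsplit, hH0, hH1]
    ring
  set c : ℕ → ℝ := fun j => wchB (m+1+j) * x^(2*(m+1+j)) with hc
  have hHc : ∀ i, H (i + (m+1)) = (-1:ℝ)^m * ((-1:ℝ)^i * c i) := by
    intro i
    simp only [hH, hc]
    rw [show i + (m+1) = m+1+i from by ring]
    rw [show m+1+i+1 = m + (i + 2) from by ring, pow_add, pow_add]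
    ring
  have hcpos : ∀ j, 0 < c j := by
    intro j
    have : 0 < wchB (m+1+j) := wchB_pos (by omega)
    positivity
  have hcdec : ∀ j, c (j+1) < c j := by
    intro j
    simp only [hc]
    have := wchB_succ_lt (K := m+1+j) (by omega) hx0 hx2
    rw [show m+1+(j+1) = (m+1+j)+1 from by ring]
    exact this
  have hs2 : Summable fun i => (-1:ℝ)^i * c i := by
    have h1 : Summable fun i => H (i + (m+1)) :=
      (summable_nat_add_iff (m+1)).2 hsum.summable
    have h2 : Summable fun i => (-1:ℝ)^m * ((-1:ℝ)^i * c i) :=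
      h1.congr fun i => hHc i
    have h3 := h2.mul_left ((-1:ℝ)^m)
    refine h3.congr fun i => ?_
    rw [← mul_assoc, ← mul_pow]
    norm_num
  obtain ⟨hS0, hS1⟩ := alt_strict c hcpos hcdec hs2
  have hEeq : ∑' i, H (i + (m+1)) = (-1:ℝ)^m * ∑' i, (-1:ℝ)^i * c i := by
    rw [← tsum_mul_left]
    exact tsum_congr hHc
  rw [hE, hEeq, abs_mul, abs_pow, abs_neg, abs_one, one_pow, one_mul,
    abs_of_pos hS0]
  have hc0 : c 0 = wchB (m+1) * x^(2*m+2) := by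
    show wchB (m+1+0) * x^(2*(m+1+0)) = _
    rw [Nat.add_zero, show 2*(m+1) = 2*m+2 from by ring]
  linarith [hS1, hc0.symm.le]
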